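/- Let G be a group, ε : G → {±1} a group homomorphism, and D : G → ℤ² a function satisfying the cocycle condition D(gf) = D(f) + ε(f)·D(g) (where ±1 acts on ℤ² by scalar multiplication). Let A, B ⊆ G be subsets such that for all f ∈ A, D(f) = (-1 + ε(f), 0), and for all f ∈ B, D(f) = (0, -1 + ε(f)). Then for every element f of the subgroup generated by A ∪ B, D(f) = (2k, -2k) for some integer k if ε(f) = 1, and D(f) = (2k-2, -2k) for some integer k if ε(f) = -1. In particular the reduction of D(f) modulo 2 is (0,0) ∈ (ℤ/2ℤ)². -/

import Mathlib

/-- Let `G` be a group, `ε : G → {±1}` a homomorphism and `D : G → ℤ²` a function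
satisfying the cocycle condition `D(g·f) = D(f) + ε(f)·D(g)`.  If `A` and `B` are
subsets of `G` with `D(f) = (-1 + ε(f), 0)` for `f ∈ A` and `D(f) = (0, -1 + ε(f))`
for `f ∈ B`, then every element `f` of the subgroup generated by `A ∪ B` satisfies
`D(f) = (2k, -2k)` for some `k ∈ ℤ` when `ε(f) = 1`, and `D(f) = (2k - 2, -2k)` for
some `k ∈ ℤ` when `ε(f) = -1`; in particular `D(f) ≡ (0,0) mod 2`. -/
theorem degree_on_subgroup_generated {G : Type*} [Group G]
    (ε : G →* ℤˣ) (D : G → ℤ × ℤ)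
    (hD : ∀ f g : G, D (g * f) = D f + (ε f : ℤ) • D g)
    (A B : Set G)
    (hA : ∀ f ∈ A, D f = (-1 + (ε f : ℤ), 0))
    (hB : ∀ f ∈ B, D f = (0, -1 + (ε f : ℤ))) :
    ∀ f ∈ Subgroup.closure (A ∪ B),
      (ε f = 1 → ∃ k : ℤ, D f = (2 * k, -(2 * k))) ∧
      (ε f = -1 → ∃ k : ℤ, D f = (2 * k - 2, -(2 * k))) ∧
      (((D f).1 : ZMod 2), ((D f).2 : ZMod 2)) = ((0 : ZMod 2), (0 : ZMod 2)) := by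
  have hone : D 1 = 0 := by
    have h := hD 1 1
    rw [mul_one, map_one, Units.val_one, one_smul] at h
    have := left_eq_add.mp h
    rw [this]
  have key : ∀ f ∈ Subgroup.closure (A ∪ B),
      (ε f = 1 → ∃ k : ℤ, D f = (2 * k, -(2 * k))) ∧
      (ε f = -1 → ∃ k : ℤ, D f = (2 * k - 2, -(2 * k))) := by
    intro f hf
    induction hf using Subgroup.closure_induction with
    | mem x hx =>
      rcases hx with hx | hx
      · have h := hA x hx
        rcases Int.units_eq_one_or (ε x) with he | he
        · refine ⟨fun _ => ⟨0, ?_⟩, fun h' => by rw [he] at h'; exact absurd h' (by decide)⟩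
          rw [h, he]; simp
        · refine ⟨fun h' => by rw [he] at h'; exact absurd h' (by decide), fun _ => ⟨0, ?_⟩⟩
          rw [h, he]; simp [Prod.ext_iff]
      · have h := hB x hx
        rcases Int.units_eq_one_or (ε x) with he | he
        · refine ⟨fun _ => ⟨0, ?_⟩, fun h' => by rw [he] at h'; exact absurd h' (by decide)⟩
          rw [h, he]; simp
        · refine ⟨fun h' => by rw [he] at h'; exact absurd h' (by decide), fun _ => ⟨1, ?_⟩⟩
          rw [h, he]; simp [Prod.ext_iff]
    | one =>
      exact ⟨fun _ => ⟨0, by simp [hone, Prod.ext_iff]⟩,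
        fun h' => by rw [map_one] at h'; exact absurd h' (by decide)⟩
    | mul x y hx hy ihx ihy =>
      have hmul : D (x * y) = D y + (ε y : ℤ) • D x := hD y x
      have hexy : ε (x * y) = ε x * ε y := map_mul ε x y
      rcases Int.units_eq_one_or (ε x) with hex | hex <;>
        rcases Int.units_eq_one_or (ε y) with hey | hey
      · obtain ⟨a, ha⟩ := ihx.1 hex
        obtain ⟨b, hb⟩ := ihy.1 hey
        refine ⟨fun _ => ⟨a + b, ?_⟩,
          fun h => by rw [hexy, hex, hey] at h; exact absurd h (by decide)⟩
        rw [hmul, ha, hb, hey]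
        simp [Prod.ext_iff]; constructor <;> ring
      · obtain ⟨a, ha⟩ := ihx.1 hex
        obtain ⟨b, hb⟩ := ihy.2 hey
        refine ⟨fun h => by rw [hexy, hex, hey] at h; exact absurd h (by decide),
          fun _ => ⟨b - a, ?_⟩⟩
        rw [hmul, ha, hb, hey]
        simp [Prod.ext_iff]; constructor <;> ring
      · obtain ⟨a, ha⟩ := ihx.2 hex
        obtain ⟨b, hb⟩ := ihy.1 hey
        refine ⟨fun h => by rw [hexy, hex, hey] at h; exact absurd h (by decide),
          fun _ => ⟨a + b, ?_⟩⟩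
        rw [hmul, ha, hb, hey]
        simp [Prod.ext_iff]; constructor <;> ring
      · obtain ⟨a, ha⟩ := ihx.2 hex
        obtain ⟨b, hb⟩ := ihy.2 hey
        refine ⟨fun _ => ⟨b - a, ?_⟩,
          fun h => by rw [hexy, hex, hey] at h; exact absurd h (by decide)⟩
        rw [hmul, ha, hb, hey]
        simp [Prod.ext_iff]; constructor <;> ring
    | inv x hx ihx =>
      have hinv : (0 : ℤ × ℤ) = D x⁻¹ + ((ε x⁻¹ : ℤˣ) : ℤ) • D x := by
        have h := hD x⁻¹ x
        rwa [mul_inv_cancel, hone] at h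
      have hei : ε x⁻¹ = (ε x)⁻¹ := map_inv ε x
      rcases Int.units_eq_one_or (ε x) with hex | hex
      · obtain ⟨a, ha⟩ := ihx.1 hex
        have he' : ε x⁻¹ = 1 := by rw [hei, hex]; decide
        refine ⟨fun _ => ⟨-a, ?_⟩,
          fun h => by rw [he'] at h; exact absurd h (by decide)⟩
        have : D x⁻¹ = -((1 : ℤ) • D x) := by
          rw [eq_neg_iff_add_eq_zero]
          rw [he'] at hinv
          simpa using hinv.symm
        rw [this, ha]
        simp [Prod.ext_iff]
      · obtain ⟨a, ha⟩ := ihx.2 hex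
        have he' : ε x⁻¹ = -1 := by rw [hei, hex]; decide
        refine ⟨fun h => by rw [he'] at h; exact absurd h (by decide),
          fun _ => ⟨a, ?_⟩⟩
        have hsub : D x⁻¹ - D x = 0 := by
          rw [he'] at hinv
          have h2 := hinv.symm
          simp only [Units.val_neg, Units.val_one, neg_smul, one_smul] at h2
          rwa [← sub_eq_add_neg] at h2
        rw [sub_eq_zero.mp hsub, ha]
  intro f hf
  obtain ⟨h1, h2⟩ := key f hf
  refine ⟨h1, h2, ?_⟩
  rcases Int.units_eq_one_or (ε f) with he | he
  · obtain ⟨k, hk⟩ := h1 he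
    have hc : ∀ n : ℤ, 2 ∣ n → ((n : ZMod 2)) = 0 :=
      fun n h => (ZMod.intCast_zmod_eq_zero_iff_dvd n 2).mpr h
    rw [hk, Prod.mk.injEq]
    exact ⟨hc _ ⟨k, rfl⟩, hc _ ⟨-k, by ring⟩⟩
  · obtain ⟨k, hk⟩ := h2 he
    have hc : ∀ n : ℤ, 2 ∣ n → ((n : ZMod 2)) = 0 :=
      fun n h => (ZMod.intCast_zmod_eq_zero_iff_dvd n 2).mpr h
    rw [hk, Prod.mk.injEq]
    exact ⟨hc _ ⟨k - 1, by ring⟩, hc _ ⟨-k, by ring⟩⟩
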